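/- Let D be a finite oriented graph with density function δ (a probability distribution maximizing ∑_{(u,v)∈E(D)} δ(u)δ(v)). Then the subgraph of D induced by the support {v : δ(v) > 0} is an orientation of a blow-up of K_k for some k ≥ 1, and the sum of δ(u) over all copies u of each fixed vertex of K_k equals 1/k. -/
import Mathlib


open Finset

set_option linter.unusedSectionVars false

section Aux
variable {V : Type*} [Fintype V] [DecidableEq V] (E : V → V → Prop) [DecidableRel E]

def Bform (f g : V → ℝ) : ℝ := ∑ u, ∑ v, if E u v then f u * g v else 0

def indm (u : V) : V → ℝ := fun x => if x = u then 1 else 0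

def pert (t : ℝ) (a b : V) : V → ℝ := fun x => t * indm a x - t * indm b x

variable {E}

lemma Bform_add_left (f g h : V → ℝ) :
    Bform E (fun x => f x + g x) h = Bform E f h + Bform E g h := by
  unfold Bform
  rw [← Finset.sum_add_distrib]
  refine Finset.sum_congr rfl fun u _ => ?_
  rw [← Finset.sum_add_distrib]
  refine Finset.sum_congr rfl fun v _ => ?_
  split <;> ring

lemma Bform_add_right (f g h : V → ℝ) :
    Bform E f (fun x => g x + h x) = Bform E f g + Bform E f h := by
  unfold Bform
  rw [← Finset.sum_add_distrib]
  refine Finset.sum_congr rfl fun u _ => ?_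
  rw [← Finset.sum_add_distrib]
  refine Finset.sum_congr rfl fun v _ => ?_
  split <;> ring

lemma Bform_smul_left (t : ℝ) (f g : V → ℝ) :
    Bform E (fun x => t * f x) g = t * Bform E f g := by
  unfold Bform
  rw [Finset.mul_sum]
  refine Finset.sum_congr rfl fun u _ => ?_
  rw [Finset.mul_sum]
  refine Finset.sum_congr rfl fun v _ => ?_
  split <;> ring

lemma Bform_smul_right (t : ℝ) (f g : V → ℝ) :
    Bform E f (fun x => t * g x) = t * Bform E f g := by
  unfold Bform
  rw [Finset.mul_sum]
  refine Finset.sum_congr rfl fun u _ => ?_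
  rw [Finset.mul_sum]
  refine Finset.sum_congr rfl fun v _ => ?_
  split <;> ring

lemma Bform_sub_left (f g h : V → ℝ) :
    Bform E (fun x => f x - g x) h = Bform E f h - Bform E g h := by
  have := Bform_add_left (E := E) (fun x => f x - g x) g h
  simp only [sub_add_cancel] at this
  linarith

lemma Bform_sub_right (f g h : V → ℝ) :
    Bform E f (fun x => g x - h x) = Bform E f g - Bform E f h := by
  have := Bform_add_right (E := E) f (fun x => g x - h x) h
  simp only [sub_add_cancel] at this
  linarith

lemma Bform_ind_left (u : V) (g : V → ℝ) :
    Bform E (indm u) g = ∑ v, if E u v then g v else 0 := by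
  unfold Bform indm
  rw [Finset.sum_eq_single u]
  · refine Finset.sum_congr rfl fun v _ => ?_; simp
  · intro x _ hx
    apply Finset.sum_eq_zero
    intro v _
    simp [hx]
  · simp

lemma Bform_ind_right (u : V) (g : V → ℝ) :
    Bform E g (indm u) = ∑ x, if E x u then g x else 0 := by
  unfold Bform indm
  refine Finset.sum_congr rfl fun x _ => ?_
  rw [Finset.sum_eq_single u]
  · simp
  · intro v _ hv; simp [hv]
  · simp

lemma Bform_ind_ind (u v : V) :
    Bform E (indm u) (indm v) = if E u v then 1 else 0 := by
  rw [Bform_ind_left]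
  unfold indm
  rw [Finset.sum_eq_single v]
  · simp
  · intro x _ hx; simp [hx]
  · simp

lemma Bform_pert_left (t : ℝ) (a b : V) (g : V → ℝ) :
    Bform E (pert t a b) g = t * Bform E (indm a) g - t * Bform E (indm b) g := by
  unfold pert
  rw [Bform_sub_left (fun x => t * indm a x) (fun x => t * indm b x) g,
    Bform_smul_left, Bform_smul_left]

lemma Bform_pert_right (t : ℝ) (a b : V) (g : V → ℝ) :
    Bform E g (pert t a b) = t * Bform E g (indm a) - t * Bform E g (indm b) := by
  unfold pert
  rw [Bform_sub_right g (fun x => t * indm a x) (fun x => t * indm b x),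
    Bform_smul_right, Bform_smul_right]

lemma Bform_pert_pert (t s : ℝ) (a b c d : V) :
    Bform E (pert t a b) (pert s c d) =
      t * s * ((if E a c then (1:ℝ) else 0) - (if E a d then 1 else 0)
        - (if E b c then 1 else 0) + (if E b d then 1 else 0)) := by
  rw [Bform_pert_left, Bform_pert_right, Bform_pert_right,
    Bform_ind_ind, Bform_ind_ind, Bform_ind_ind, Bform_ind_ind]
  ring

lemma Bform_expand (f h : V → ℝ) :
    Bform E (fun x => f x + h x) (fun x => f x + h x) =
      Bform E f f + Bform E f h + Bform E h f + Bform E h h := by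
  rw [Bform_add_left, Bform_add_right, Bform_add_right]
  ring

lemma sum_indm (a : V) : ∑ x, indm a x = 1 := by
  unfold indm; simp

lemma sum_pert (t : ℝ) (a b : V) : ∑ x, pert t a b x = 0 := by
  unfold pert
  rw [Finset.sum_sub_distrib, ← Finset.mul_sum, ← Finset.mul_sum, sum_indm, sum_indm]
  ring

/-- degree of u with respect to weight g -/
def ddeg (g : V → ℝ) (u : V) : ℝ := Bform E (indm u) g + Bform E g (indm u)

end Aux

section Main
variable {V : Type*} [Fintype V] [DecidableEq V] {E : V → V → Prop} [DecidableRel E]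

lemma degree_eq
    (hirr : ∀ v, ¬ E v v) (hanti : ∀ u v, E u v → ¬ E v u)
    (δ : V → ℝ) (hnonneg : ∀ v, 0 ≤ δ v) (hsum : (∑ v, δ v) = 1)
    (hmax : ∀ δ' : V → ℝ, (∀ v, 0 ≤ δ' v) → (∑ v, δ' v) = 1 →
      (∑ u, ∑ v, if E u v then δ' u * δ' v else 0) ≤
      (∑ u, ∑ v, if E u v then δ u * δ v else 0))
    {u v : V} (huv : u ≠ v) (hu : 0 < δ u) (hv : 0 < δ v) :
    ddeg (E := E) δ u = ddeg (E := E) δ v := by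
  set ε := min (δ u) (δ v) with hε
  have hεpos : 0 < ε := lt_min hu hv
  -- key inequality
  have key : ∀ t : ℝ, |t| ≤ ε →
      t * (ddeg (E := E) δ u - ddeg (E := E) δ v) ≤ t ^ 2 := by
    intro t ht
    have habs := abs_le.mp ht
    set δ' : V → ℝ := fun x => δ x + pert t u v x with hδ'
    have hn : ∀ x, 0 ≤ δ' x := by
      intro x
      simp only [hδ', pert, indm]
      by_cases hxu : x = u
      · subst hxu
        simp only [if_pos rfl, if_neg huv]
        norm_num
        have : ε ≤ δ x := min_le_left _ _
        nlinarith [habs.1]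
      · by_cases hxv : x = v
        · subst hxv
          simp only [if_neg hxu, if_pos rfl]
          norm_num
          have : ε ≤ δ x := min_le_right _ _
          nlinarith [habs.2]
        · simp only [if_neg hxu, if_neg hxv]
          have := hnonneg x
          nlinarith
    have hs : (∑ x, δ' x) = 1 := by
      simp only [hδ']
      rw [Finset.sum_add_distrib, hsum, sum_pert]
      ring
    have hB : Bform E δ' δ' ≤ Bform E δ δ := hmax δ' hn hs
    rw [hδ', Bform_expand, Bform_pert_right, Bform_pert_left, Bform_pert_pert] at hB
    rw [if_neg (hirr u), if_neg (hirr v)] at hB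
    have hEuv : (if E u v then (1:ℝ) else 0) + (if E v u then 1 else 0) ≤ 1 := by
      by_cases h1 : E u v
      · rw [if_pos h1, if_neg (hanti u v h1)]; norm_num
      · rw [if_neg h1]
        split <;> norm_num
    unfold ddeg at *
    nlinarith [sq_nonneg t]
  -- conclude
  set D := ddeg (E := E) δ u - ddeg (E := E) δ v with hD
  have : D = 0 := by
    by_contra hne
    have hDpos : 0 < |D| := abs_pos.mpr hne
    set m := min ε (|D| / 2) with hm
    have hmpos : 0 < m := lt_min hεpos (by linarith)
    have habsm : |m| ≤ ε := by rw [abs_of_pos hmpos]; exact min_le_left _ _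
    have h1 := key m habsm
    have h2 := key (-m) (by rwa [abs_neg])
    have h3 : m ≤ |D| / 2 := min_le_right _ _
    have h4 : m * |D| ≤ m ^ 2 := by
      rcases abs_cases D with ⟨hD1, _⟩ | ⟨hD1, _⟩
      · rw [hD1]; exact h1
      · rw [hD1]; nlinarith [h2]
    have h5 : m ^ 2 ≤ m * (|D| / 2) := by
      nlinarith [mul_le_mul_of_nonneg_left h3 hmpos.le]
    nlinarith [mul_pos hmpos hDpos]
  linarith


lemma no_triangle
    (hirr : ∀ v, ¬ E v v) (hanti : ∀ u v, E u v → ¬ E v u)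
    (δ : V → ℝ) (hnonneg : ∀ v, 0 ≤ δ v) (hsum : (∑ v, δ v) = 1)
    (hmax : ∀ δ' : V → ℝ, (∀ v, 0 ≤ δ' v) → (∑ v, δ' v) = 1 →
      (∑ u, ∑ v, if E u v then δ' u * δ' v else 0) ≤
      (∑ u, ∑ v, if E u v then δ u * δ v else 0))
    {u v w : V} (huv : u ≠ v) (hvw : v ≠ w) (huw : u ≠ w)
    (hu : 0 < δ u) (hv : 0 < δ v) (hw : 0 < δ w)
    (nuv1 : ¬ E u v) (nuv2 : ¬ E v u) (nvw1 : ¬ E v w) (nvw2 : ¬ E w v)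
    (adj : E u w ∨ E w u) : False := by
  have hdeq1 : ddeg (E := E) δ u = ddeg (E := E) δ v :=
    degree_eq hirr hanti δ hnonneg hsum hmax huv hu hv
  have hdeq2 : ddeg (E := E) δ v = ddeg (E := E) δ w :=
    degree_eq hirr hanti δ hnonneg hsum hmax hvw hv hw
  set δ' : V → ℝ := fun x => δ x + (pert (δ u) v u x + pert (δ w) v w x) with hδ'
  have hn : ∀ x, 0 ≤ δ' x := by
    intro x
    simp only [hδ', pert, indm]
    by_cases hxv : x = v
    · subst hxv
      simp only [if_pos rfl, if_neg (Ne.symm huv), if_neg hvw]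
      norm_num
      linarith [hu.le, hv.le, hw.le]
    · by_cases hxu : x = u
      · subst hxu
        simp only [if_pos rfl, if_neg hxv, if_neg huw]
        norm_num
      · by_cases hxw : x = w
        · subst hxw
          simp only [if_pos rfl, if_neg hxv, if_neg hxu]
          norm_num
        · simp only [if_neg hxv, if_neg hxu, if_neg hxw]
          have := hnonneg x
          norm_num
          linarith
  have hs : (∑ x, δ' x) = 1 := by
    simp only [hδ']
    rw [Finset.sum_add_distrib, Finset.sum_add_distrib, hsum, sum_pert, sum_pert]
    ring
  have hB : Bform E δ' δ' ≤ Bform E δ δ := hmax δ' hn hs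
  rw [hδ', Bform_expand] at hB
  have e1 : Bform E δ (fun x => pert (δ u) v u x + pert (δ w) v w x)
      = δ u * (Bform E δ (indm v) - Bform E δ (indm u))
        + δ w * (Bform E δ (indm v) - Bform E δ (indm w)) := by
    rw [Bform_add_right, Bform_pert_right, Bform_pert_right]; ring
  have e2 : Bform E (fun x => pert (δ u) v u x + pert (δ w) v w x) δ
      = δ u * (Bform E (indm v) δ - Bform E (indm u) δ)
        + δ w * (Bform E (indm v) δ - Bform E (indm w) δ) := by
    rw [Bform_add_left, Bform_pert_left, Bform_pert_left]; ring
  have e3 : Bform E (fun x => pert (δ u) v u x + pert (δ w) v w x)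
      (fun x => pert (δ u) v u x + pert (δ w) v w x) = δ u * δ w := by
    rw [Bform_expand, Bform_pert_pert, Bform_pert_pert, Bform_pert_pert, Bform_pert_pert]
    rw [if_neg (hirr v), if_neg (hirr u), if_neg (hirr w), if_neg nuv1, if_neg nuv2,
      if_neg nvw1, if_neg nvw2]
    rcases adj with h | h
    · rw [if_pos h, if_neg (hanti u w h)]; ring
    · rw [if_pos h, if_neg (hanti w u h)]; ring
  rw [e1, e2, e3] at hB
  unfold ddeg at hdeq1 hdeq2
  nlinarith [mul_pos hu hw]


end Main

/-- Let `D` be a finite oriented graph and `δ` a density function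
(a probability distribution maximizing `∑_{(u,v)∈E} δ u * δ v`). Then the subgraph
induced by the support of `δ` is an orientation of a blow-up of `K_k` for some
`k ≥ 1`: there is a colouring `c` of the vertices such that two support vertices are
joined (in some direction) iff their colours differ, and the total `δ`-mass of each
colour class equals `1/k`. -/

theorem density_function_support_is_blowup
    {V : Type*} [Fintype V] [DecidableEq V]
    (E : V → V → Prop) [DecidableRel E]
    (hirr : ∀ v, ¬ E v v)
    (hanti : ∀ u v, E u v → ¬ E v u)
    (δ : V → ℝ)
    (hnonneg : ∀ v, 0 ≤ δ v) (hsum : (∑ v, δ v) = 1)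
    (hmax : ∀ δ' : V → ℝ, (∀ v, 0 ≤ δ' v) → (∑ v, δ' v) = 1 →
      (∑ u, ∑ v, if E u v then δ' u * δ' v else 0) ≤
      (∑ u, ∑ v, if E u v then δ u * δ v else 0)) :
    ∃ (k : ℕ), 1 ≤ k ∧ ∃ c : V → Fin k,
      (∀ u v, 0 < δ u → 0 < δ v → ((E u v ∨ E v u) ↔ c u ≠ c v)) ∧
      (∀ i : Fin k,
        (∑ v ∈ Finset.univ.filter (fun v => 0 < δ v ∧ c v = i), δ v) = 1 / k) := by
  classical
  -- the support is nonempty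
  have hex : ∃ v, 0 < δ v := by
    by_contra h
    push_neg at h
    have h0 : (∑ v, δ v) = 0 :=
      Finset.sum_eq_zero fun v _ => le_antisymm (h v) (hnonneg v)
    rw [hsum] at h0
    norm_num at h0
  obtain ⟨v0, hv0⟩ := hex
  -- non-adjacency is an equivalence relation on the support
  set S := {x : V // 0 < δ x} with hS
  set r : S → S → Prop := fun a b => ¬ E a.1 b.1 ∧ ¬ E b.1 a.1 with hr
  have hrefl : ∀ a, r a a := fun a => ⟨hirr _, hirr _⟩
  have hsymm : ∀ {a b}, r a b → r b a := fun h => ⟨h.2, h.1⟩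
  have htrans : ∀ {a b c}, r a b → r b c → r a c := by
    intro a b c hab hbc
    by_cases hac : a.1 = c.1
    · exact ⟨by rw [hac]; exact hirr _, by rw [hac]; exact hirr _⟩
    · by_cases hab' : a.1 = b.1
      · exact ⟨by rw [hab']; exact hbc.1, by rw [hab']; exact hbc.2⟩
      · by_cases hbc' : b.1 = c.1
        · exact ⟨by rw [← hbc']; exact hab.1, by rw [← hbc']; exact hab.2⟩
        · constructor
          · intro hE
            exact no_triangle hirr hanti δ hnonneg hsum hmax hab' hbc' hac a.2 b.2 c.2
              hab.1 hab.2 hbc.1 hbc.2 (Or.inl hE)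
          · intro hE
            exact no_triangle hirr hanti δ hnonneg hsum hmax hab' hbc' hac a.2 b.2 c.2
              hab.1 hab.2 hbc.1 hbc.2 (Or.inr hE)
  set sr : Setoid S := ⟨r, ⟨hrefl, fun h => hsymm h, fun h h' => htrans h h'⟩⟩ with hsr
  haveI : Fintype (Quotient sr) := Fintype.ofFinite _
  set k := Fintype.card (Quotient sr) with hkdef
  set e : Quotient sr ≃ Fin k := Fintype.equivFin _ with he
  have hk : 1 ≤ k := Fintype.card_pos_iff.mpr ⟨Quotient.mk sr ⟨v0, hv0⟩⟩
  set c : V → Fin k :=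
    fun x => if hx : 0 < δ x then e (Quotient.mk sr ⟨x, hx⟩) else e (Quotient.mk sr ⟨v0, hv0⟩)
    with hc
  -- colours agree iff non-adjacent
  have hcol : ∀ (x y : V) (hx : 0 < δ x) (hy : 0 < δ y),
      (c x = c y ↔ (¬ E x y ∧ ¬ E y x)) := by
    intro x y hx hy
    simp only [hc, dif_pos hx, dif_pos hy]
    rw [Equiv.apply_eq_iff_eq]
    constructor
    · intro h
      exact Quotient.exact h
    · intro h
      exact Quotient.sound h
  have prop1 : ∀ u v, 0 < δ u → 0 < δ v → ((E u v ∨ E v u) ↔ c u ≠ c v) := by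
    intro u v hu hv
    rw [ne_eq, hcol u v hu hv]
    tauto
  refine ⟨k, hk, c, prop1, ?_⟩
  -- mass of each colour class
  set m : Fin k → ℝ := fun i => ∑ v, if 0 < δ v ∧ c v = i then δ v else 0 with hm
  -- every colour class has a representative in the support
  have hrep : ∀ i : Fin k, ∃ x, 0 < δ x ∧ c x = i := by
    intro i
    obtain ⟨a, ha⟩ := Quotient.exists_rep (e.symm i)
    refine ⟨a.1, a.2, ?_⟩
    simp only [hc, dif_pos a.2]
    have : Quotient.mk sr ⟨a.1, a.2⟩ = e.symm i := by rw [← ha]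
    rw [this, Equiv.apply_symm_apply]
  -- degree formula: ddeg δ x = 1 - m (c x) for x in the support
  have hdegf : ∀ x, 0 < δ x → ddeg (E := E) δ x = 1 - m (c x) := by
    intro x hx
    unfold ddeg
    rw [Bform_ind_left, Bform_ind_right, ← Finset.sum_add_distrib]
    have hpt : ∀ y, ((if E x y then δ y else 0) + (if E y x then δ y else 0))
        = (if 0 < δ y then δ y else 0) - (if 0 < δ y ∧ c y = c x then δ y else 0) := by
      intro y
      by_cases hy : 0 < δ y
      · by_cases hcy : c y = c x
        · have hnadj : ¬ E y x ∧ ¬ E x y := (hcol y x hy hx).mp hcy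
          rw [if_neg hnadj.2, if_neg hnadj.1, if_pos hy, if_pos ⟨hy, hcy⟩]
          ring
        · have hadj : E x y ∨ E y x := (prop1 x y hx hy).mpr fun h : c x = c y => hcy h.symm
          rw [if_pos hy, if_neg (fun h : 0 < δ y ∧ c y = c x => hcy h.2)]
          rcases hadj with h | h
          · rw [if_pos h, if_neg (hanti x y h)]; ring
          · rw [if_pos h, if_neg (hanti y x h)]; ring
      · have hy0 : δ y = 0 := le_antisymm (not_lt.mp hy) (hnonneg y)
        rw [if_neg hy, if_neg (fun h : 0 < δ y ∧ c y = c x => hy h.1)]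
        simp [hy0]
    rw [Finset.sum_congr rfl fun y _ => hpt y, Finset.sum_sub_distrib]
    have h1 : (∑ y, if 0 < δ y then δ y else 0) = 1 := by
      rw [← hsum]
      refine Finset.sum_congr rfl fun y _ => ?_
      by_cases hy : 0 < δ y
      · rw [if_pos hy]
      · rw [if_neg hy, le_antisymm (not_lt.mp hy) (hnonneg y)]
    rw [h1, hm]
  -- all masses are equal
  have hmeq : ∀ i j : Fin k, m i = m j := by
    intro i j
    by_cases hij : i = j
    · rw [hij]
    · obtain ⟨x, hx, hcx⟩ := hrep i
      obtain ⟨y, hy, hcy⟩ := hrep j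
      have hxy : x ≠ y := by
        intro h
        apply hij
        rw [← hcx, ← hcy, h]
      have := degree_eq hirr hanti δ hnonneg hsum hmax hxy hx hy
      rw [hdegf x hx, hdegf y hy, hcx, hcy] at this
      linarith
  -- total mass is 1
  have hmsum : (∑ i : Fin k, m i) = 1 := by
    rw [hm]
    rw [Finset.sum_comm]
    rw [← hsum]
    refine Finset.sum_congr rfl fun v _ => ?_
    by_cases hv : 0 < δ v
    · simp only [hv, true_and]
      rw [Finset.sum_ite_eq (Finset.univ : Finset (Fin k)) (c v) (fun _ => δ v)]
      simp
    · have hv0 : δ v = 0 := le_antisymm (not_lt.mp hv) (hnonneg v)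
      simp [hv, hv0]
  -- conclude
  intro i
  have hkey : (k : ℝ) * m i = 1 := by
    calc (k : ℝ) * m i = ∑ _j : Fin k, m i := by
          rw [Finset.sum_const, Finset.card_univ, Fintype.card_fin, nsmul_eq_mul]
      _ = ∑ j : Fin k, m j := Finset.sum_congr rfl fun j _ => hmeq i j
      _ = 1 := hmsum
  have hk0 : (k : ℝ) ≠ 0 := Nat.cast_ne_zero.mpr (by omega)
  rw [Finset.sum_filter]
  have hmi : (∑ v, if 0 < δ v ∧ c v = i then δ v else 0) = m i := rfl
  rw [hmi, eq_div_iff hk0]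
  linarith [hkey]
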